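/- With Z̃_n = ∑_{k=0}^{n∧N} Δ̃_k/q_k, for −1 ≤ m ≤ n one has E[(Z̃_n − Z̃_m)²] = (E[Y_m − Y_n])²/q_{m+1} + ∑_{i=m+1}^{n} ( Var(Δ_i)/q_i + (E[Y_i − Y_n])² (1/q_{i+1} − 1/q_i) ), where Δ_i = Y_i − Y_{i−1}. -/

import Mathlib

open MeasureTheory ProbabilityTheory Filter

/-- The increments `Δ_k = Y_k - Y_{k-1}` with the convention `Y_{-1} = 0`. -/
noncomputable def diffSeq {Ω : Type*} (Y : ℕ → Ω → ℝ) : ℕ → Ω → ℝ :=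
  fun k ω => Y k ω - if k = 0 then 0 else Y (k - 1) ω

/-- `Y` indexed by integers, with `Y_j = 0` for `j < 0`. -/
noncomputable def YInt {Ω : Type*} (Y : ℕ → Ω → ℝ) : ℤ → Ω → ℝ :=
  fun j ω => if j < 0 then 0 else Y j.toNat ω

/-- `Z̃_n = ∑_{k=0}^{n ∧ N} Δ̃_k / q_k`, with `Z̃_{-1} = 0`. -/
noncomputable def indepSumTrunc {Ω : Type*} (Δ : ℕ → Ω → ℝ) (q : ℕ → ℝ)
    (N : Ω → ℕ) : ℤ → Ω → ℝ :=
  fun j ω => if j < 0 then 0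
    else ∑ k ∈ Finset.range (min j.toNat (N ω) + 1), Δ k ω / q k

lemma tele_aux (g : ℕ → ℝ) : ∀ b a, a ≤ b → ∑ i ∈ Finset.Ico a b, (g i - g (i+1)) = g a - g b := by
  intro b
  induction b with
  | zero => intro a ha; interval_cases a; simp
  | succ b ih =>
    intro a ha
    rcases Nat.lt_or_ge a (b+1) with h | h
    · have h' : a ≤ b := by omega
      rw [Finset.sum_Ico_succ_top h', ih a h']; ring
    · have : a = b + 1 := by omega
      subst this; simp

lemma double_sum_eq (q d s V T : ℕ → ℝ) (M K : ℕ) (hMK : M ≤ K)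
    (hs : ∀ i, s i = V i + d i ^ 2) (hTd : ∀ i, d i = T i - T (i+1))
    (hT : ∀ i, i ≤ K → ∑ j ∈ Finset.Ico i K, d j = T i) (hTK : T K = 0) :
    ∑ i ∈ Finset.Ico M K, ∑ j ∈ Finset.Ico M K,
        (if i = j then s i / q i else d i * d j / q (min i j))
      = T M ^ 2 / q M + ∑ i ∈ Finset.Ico M K,
          (V i / q i + T (i+1) ^ 2 * (1 / q (i+1) - 1 / q i)) := by
  have step1 : ∀ i ∈ Finset.Ico M K,
      (∑ j ∈ Finset.Ico M K, (if i = j then s i / q i else d i * d j / q (min i j)))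
      = (∑ j ∈ Finset.Ico M i, d i * d j / q j) + s i / q i + d i * T (i+1) / q i := by
    intro i hi
    rw [Finset.mem_Ico] at hi
    rw [← Finset.sum_Ico_consecutive _ hi.1 (le_of_lt hi.2),
      Finset.sum_eq_sum_Ico_succ_bot hi.2]
    have e1 : ∀ j ∈ Finset.Ico M i, (if i = j then s i / q i else d i * d j / q (min i j))
        = d i * d j / q j := by
      intro j hj; rw [Finset.mem_Ico] at hj
      rw [if_neg (by omega), min_eq_right (by omega)]
    have e2 : ∀ j ∈ Finset.Ico (i+1) K, (if i = j then s i / q i else d i * d j / q (min i j))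
        = d i * d j / q i := by
      intro j hj; rw [Finset.mem_Ico] at hj
      rw [if_neg (by omega), min_eq_left (by omega)]
    rw [Finset.sum_congr rfl e1, Finset.sum_congr rfl e2, if_pos rfl,
      ← hT (i+1) (by omega), Finset.mul_sum]
    rw [Finset.sum_div]
    ring
  rw [Finset.sum_congr rfl step1]
  have swap : ∑ i ∈ Finset.Ico M K, ((∑ j ∈ Finset.Ico M i, d i * d j / q j) + s i / q i
        + d i * T (i+1) / q i)
      = ∑ i ∈ Finset.Ico M K, (s i / q i + 2 * (d i * T (i+1) / q i)) := by
    rw [Finset.sum_add_distrib, Finset.sum_add_distrib]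
    have : ∑ i ∈ Finset.Ico M K, ∑ j ∈ Finset.Ico M i, d i * d j / q j
        = ∑ i ∈ Finset.Ico M K, d i * T (i+1) / q i := by
      rw [← Finset.sum_Ico_Ico_comm' M K (fun j i => d i * d j / q j)]
      refine Finset.sum_congr rfl fun i hi => ?_
      rw [Finset.mem_Ico] at hi
      rw [← hT (i+1) (by omega), Finset.mul_sum, Finset.sum_div,
        Finset.sum_congr rfl fun j hj => ?_]
      ring
    rw [this, ← Finset.sum_add_distrib, ← Finset.sum_add_distrib]
    exact Finset.sum_congr rfl fun i _ => by ring
  rw [swap]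
  have per : ∀ i ∈ Finset.Ico M K, s i / q i + 2 * (d i * T (i+1) / q i)
      = (V i / q i + T (i+1) ^ 2 * (1 / q (i+1) - 1 / q i))
        + (T i ^ 2 / q i - T (i+1) ^ 2 / q (i+1)) := by
    intro i hi
    have hd := hTd i
    rw [hs i, hd]
    field_simp
    ring
  rw [Finset.sum_congr rfl per, Finset.sum_add_distrib, tele_aux (fun i => T i ^ 2 / q i) K M hMK]
  simp only [hTK]
  ring

set_option maxHeartbeats 1000000

theorem stmt_13 {Ω : Type*} [MeasurableSpace Ω] (μ : Measure Ω)
    [IsProbabilityMeasure μ]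
    (Y : ℕ → Ω → ℝ) (hYmeas : ∀ n, Measurable (Y n))
    (hY : ∀ n, MemLp (Y n) 2 μ)
    (Δ : ℕ → Ω → ℝ) (hΔmeas : ∀ n, Measurable (Δ n))
    (hΔL2 : ∀ n, MemLp (Δ n) 2 μ)
    (hΔindep : iIndepFun Δ μ)
    (hΔdist : ∀ n, IdentDistrib (Δ n) (diffSeq Y n) μ μ)
    (q : ℕ → ℝ) (hq0 : q 0 = 1) (hqdec : ∀ i, q (i + 1) ≤ q i)
    (hqpos : ∀ i, 0 < q i) (hqlim : Tendsto q atTop (nhds 0))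
    (N : Ω → ℕ) (hNmeas : Measurable N)
    (hindep : IndepFun (fun ω i => Δ i ω) N μ)
    (hN : ∀ i, μ {ω | i ≤ N ω} = ENNReal.ofReal (q i))
    (m n : ℤ) (hm : -1 ≤ m) (hmn : m ≤ n) :
    ∫ ω, (indepSumTrunc Δ q N n ω - indepSumTrunc Δ q N m ω) ^ 2 ∂μ =
      (∫ ω, (YInt Y m ω - YInt Y n ω) ∂μ) ^ 2 / q (m + 1).toNat +
        ∑ i ∈ Finset.Icc (m + 1) n,
          (variance (diffSeq Y i.toNat) μ / q i.toNat +
            (∫ ω, (YInt Y i ω - YInt Y n ω) ∂μ) ^ 2 *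
              (1 / q (i.toNat + 1) - 1 / q i.toNat)) := by
  -- trivial case n = -1
  rcases Int.lt_or_le n 0 with hn | hn
  · have hn' : n = -1 := by omega
    have hm' : m = -1 := by omega
    subst hn' hm'
    rw [show ((-1:ℤ) + 1) = 0 by ring, Finset.Icc_eq_empty (by norm_num)]
    simp [indepSumTrunc, YInt, hq0]
  -- main case: n ≥ 0
  set nn := n.toNat with hnn
  set M := (m+1).toNat with hMdef
  have hnZ : (nn : ℤ) = n := Int.toNat_of_nonneg hn
  have hMZ : (M : ℤ) = m + 1 := Int.toNat_of_nonneg (by omega)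
  have hMnn : M ≤ nn + 1 := by omega
  set K := nn + 1 with hK
  set Ind : ℕ → Ω → ℝ := fun c ω => if c ≤ N ω then 1 else 0 with hInd
  set X : ℕ → Ω → ℝ := fun k ω => Ind k ω * (Δ k ω / q k) with hX
  -- pointwise difference
  have key : ∀ (j : ℕ) ω, (∑ k ∈ Finset.range (min j (N ω) + 1), Δ k ω / q k)
      = ∑ k ∈ Finset.range (j+1), X k ω := by
    intro j ω
    have hset : Finset.range (min j (N ω) + 1)
        = (Finset.range (j+1)).filter (fun k => k ≤ N ω) := by
      ext k; simp only [Finset.mem_range, Finset.mem_filter]; omega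
    rw [hset, Finset.sum_filter]
    refine Finset.sum_congr rfl fun k _ => ?_
    simp only [hX, hInd]
    split <;> simp
  have hDiff : ∀ ω, indepSumTrunc Δ q N n ω - indepSumTrunc Δ q N m ω
      = ∑ k ∈ Finset.Ico M K, X k ω := by
    intro ω
    have h1 : indepSumTrunc Δ q N n ω = ∑ k ∈ Finset.range K, X k ω := by
      rw [indepSumTrunc, if_neg (by omega)]
      exact key nn ω
    have h2 : indepSumTrunc Δ q N m ω = ∑ k ∈ Finset.range M, X k ω := by
      rcases Int.lt_or_le m 0 with hm0 | hm0
      · have : M = 0 := by omega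
        rw [indepSumTrunc, if_pos hm0, this]
        simp
      · have hMt : m.toNat + 1 = M := by omega
        rw [indepSumTrunc, if_neg (by omega), key m.toNat ω, hMt]
    rw [h1, h2, Finset.sum_Ico_eq_sub _ hMnn]
  -- indicator facts
  have hsmeas : ∀ c, MeasurableSet {ω | c ≤ N ω} :=
    fun c => hNmeas (show MeasurableSet (Set.Ici c) from measurableSet_Ici)
  have hIndeq : ∀ c, Ind c = Set.indicator {ω | c ≤ N ω} (fun _ => (1:ℝ)) := by
    intro c; funext ω; simp [hInd, Set.indicator_apply, Set.mem_setOf_eq]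
  have hIndmeas : ∀ c, Measurable (Ind c) := by
    intro c; rw [hIndeq]; exact measurable_const.indicator (hsmeas c)
  have hIndint : ∀ c, Integrable (Ind c) μ := by
    intro c; rw [hIndeq]; exact (integrable_const (1:ℝ)).indicator (hsmeas c)
  have hIndval : ∀ c, ∫ ω, Ind c ω ∂μ = q c := by
    intro c
    simp only [hIndeq]
    rw [integral_indicator_const _ (hsmeas c), measureReal_def, hN c, smul_eq_mul, mul_one,
      ENNReal.toReal_ofReal (hqpos c).le]
  -- Δ facts
  have hΔint : ∀ i, Integrable (Δ i) μ := fun i => (hΔL2 i).integrable one_le_two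
  have hmulint : ∀ i j, Integrable (fun ω => Δ i ω * Δ j ω) μ := by
    intro i j
    rcases eq_or_ne i j with rfl | hij
    · have := (hΔL2 i).integrable_sq; simpa [sq] using this
    · exact (hΔindep.indepFun hij).integrable_mul (hΔint i) (hΔint j)
  have hXint : ∀ i j, Integrable (fun ω => X i ω * X j ω) μ := by
    intro i j
    have heq : (fun ω => X i ω * X j ω)
        = fun ω => (Ind i ω * Ind j ω * (q i * q j)⁻¹) * (Δ i ω * Δ j ω) := by
      funext ω; simp only [hX, div_eq_mul_inv, mul_inv]; ring
    rw [heq]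
    refine Integrable.bdd_mul (c := (q i * q j)⁻¹) (hmulint i j) ?_ (Filter.Eventually.of_forall fun ω => ?_)
    · exact (((hIndmeas i).mul (hIndmeas j)).mul_const _).aestronglyMeasurable
    · have h1 : Ind i ω * Ind j ω ≤ 1 := by
        simp only [hInd]; split_ifs <;> norm_num
      have h0 : (0:ℝ) ≤ Ind i ω * Ind j ω := by
        simp only [hInd]; split_ifs <;> norm_num
      have hqq : (0:ℝ) < (q i * q j)⁻¹ := inv_pos.mpr (mul_pos (hqpos i) (hqpos j))
      rw [Real.norm_eq_abs, abs_mul, abs_of_nonneg h0, abs_of_nonneg hqq.le]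
      nlinarith
  have hIndprod : ∀ i j ω, Ind i ω * Ind j ω = Ind (max i j) ω := by
    intro i j ω
    simp only [hInd, sup_le_iff]
    split_ifs <;> simp_all
  have hXval : ∀ i j, ∫ ω, X i ω * X j ω ∂μ
      = (∫ ω, Δ i ω * Δ j ω ∂μ) * q (max i j) * (q i * q j)⁻¹ := by
    intro i j
    have heq : (fun ω => X i ω * X j ω)
        = fun ω => ((fun ω => Δ i ω * Δ j ω) ω * Ind (max i j) ω) * (q i * q j)⁻¹ := by
      funext ω; rw [← hIndprod i j ω]; simp only [hX, div_eq_mul_inv, mul_inv]; ring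
    rw [heq, integral_mul_const]
    have hφ : Measurable (fun v : ℕ → ℝ => v i * v j) :=
      (measurable_pi_apply i).mul (measurable_pi_apply j)
    have hψ : Measurable (fun t : ℕ => if max i j ≤ t then (1:ℝ) else 0) :=
      measurable_from_top
    have hIndep2 : IndepFun (fun ω => Δ i ω * Δ j ω) (Ind (max i j)) μ := hindep.comp hφ hψ
    have hmm := hIndep2.integral_mul_eq_mul_integral (hmulint i j).aestronglyMeasurable (hIndint (max i j)).aestronglyMeasurable
    rw [show (∫ (a : Ω), (fun ω => Δ i ω * Δ j ω) a * Ind (max i j) a ∂μ)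
        = integral μ ((fun ω => Δ i ω * Δ j ω) * Ind (max i j)) from rfl, hmm, hIndval]
  -- scalar quantities
  set e : ℕ → ℝ := fun k => ∫ ω, Y k ω ∂μ with he
  set E : ℕ → ℝ := fun t => if t = 0 then 0 else e (t-1) with hE
  set d : ℕ → ℝ := fun k => ∫ ω, Δ k ω ∂μ with hd
  set T : ℕ → ℝ := fun t => e nn - E t with hT
  set V : ℕ → ℝ := fun k => variance (diffSeq Y k) μ with hV
  set s : ℕ → ℝ := fun k => ∫ ω, Δ k ω * Δ k ω ∂μ with hsdef
  have hYint : ∀ k, Integrable (Y k) μ := fun k => (hY k).integrable one_le_two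
  have hdval : ∀ k, d k = e k - E k := by
    intro k
    have h1 : d k = ∫ ω, diffSeq Y k ω ∂μ := (hΔdist k).integral_eq
    cases k with
    | zero =>
      simp only [hE, if_pos rfl, h1, diffSeq]
      simp [he]
    | succ t =>
      simp only [hE, if_neg (Nat.succ_ne_zero t), h1, diffSeq]
      rw [integral_sub (hYint (t+1)) (by simpa using hYint t)]
  have hsv : ∀ k, s k = V k + d k ^ 2 := by
    intro k
    have h1 : variance (Δ k) μ = V k := (hΔdist k).variance_eq
    have h2 := variance_eq_sub (hΔL2 k)
    have h3 : μ[(Δ k) ^ 2] = s k := by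
      simp only [hsdef]
      rw [show ((Δ k) ^ 2 : Ω → ℝ) = fun ω => Δ k ω * Δ k ω from funext fun ω => sq (Δ k ω) ▸ rfl]
    have h4 : μ[Δ k] = d k := rfl
    rw [h1, h3, h4] at h2
    linarith
  have hTd : ∀ i, d i = T i - T (i+1) := by
    intro i
    rw [hdval i]
    simp [hT, hE]
  have hpre : ∀ t, ∑ j ∈ Finset.range t, d j = E t := by
    intro t
    induction t with
    | zero => simp [hE]
    | succ t ih =>
      rw [Finset.sum_range_succ, ih, hdval t]
      simp [hE]
  have hTsum : ∀ i, i ≤ K → ∑ j ∈ Finset.Ico i K, d j = T i := by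
    intro i hi
    rw [Finset.sum_Ico_eq_sub _ hi, hpre, hpre]
    simp [hT, hK, hE]
  have hTK : T K = 0 := by
    simp [hT, hK, hE]
  -- LHS computation
  have hLHS : ∫ ω, (indepSumTrunc Δ q N n ω - indepSumTrunc Δ q N m ω) ^ 2 ∂μ
      = ∑ i ∈ Finset.Ico M K, ∑ j ∈ Finset.Ico M K, ∫ ω, X i ω * X j ω ∂μ := by
    have hsq : ∀ ω, (indepSumTrunc Δ q N n ω - indepSumTrunc Δ q N m ω) ^ 2
        = ∑ i ∈ Finset.Ico M K, ∑ j ∈ Finset.Ico M K, X i ω * X j ω := by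
      intro ω
      rw [hDiff ω, sq, Finset.sum_mul_sum]
    rw [integral_congr_ae (Filter.Eventually.of_forall hsq),
      integral_finset_sum _ (fun i _ => integrable_finset_sum _ fun j _ => hXint i j)]
    exact Finset.sum_congr rfl fun i _ => integral_finset_sum _ fun j _ => hXint i j
  have hpair : ∀ i j, ∫ ω, X i ω * X j ω ∂μ
      = (if i = j then s i / q i else d i * d j / q (min i j)) := by
    intro i j
    rw [hXval i j]
    rcases eq_or_ne i j with rfl | hij
    · rw [if_pos rfl, max_self]
      have hqi := (hqpos i).ne'
      simp only [hsdef]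
      have hstep : q i * ((q i)⁻¹ * (q i)⁻¹) = (q i)⁻¹ := by
        rw [← mul_assoc, mul_inv_cancel₀ hqi, one_mul]
      rw [mul_inv, mul_assoc, hstep, ← div_eq_mul_inv]
    · rw [if_neg hij]
      have hdd : ∫ ω, Δ i ω * Δ j ω ∂μ = d i * d j :=
        (hΔindep.indepFun hij).integral_mul_eq_mul_integral (hΔint i).aestronglyMeasurable (hΔint j).aestronglyMeasurable
      rw [hdd]
      have h5 : q i * q j = q (min i j) * q (max i j) := by
        rcases le_total i j with h | h
        · rw [min_eq_left h, max_eq_right h]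
        · rw [min_eq_right h, max_eq_left h]; ring
      have h6 := (hqpos (min i j)).ne'
      have h7 := (hqpos (max i j)).ne'
      have hstep : q (max i j) * ((q (min i j))⁻¹ * (q (max i j))⁻¹) = (q (min i j))⁻¹ := by
        rw [mul_comm ((q (min i j))⁻¹), ← mul_assoc, mul_inv_cancel₀ h7, one_mul]
      rw [h5, mul_inv, mul_assoc, hstep, ← div_eq_mul_inv]
  rw [hLHS, Finset.sum_congr rfl (fun i _ => Finset.sum_congr rfl (fun j _ => hpair i j)),
    double_sum_eq q d s V T M K hMnn hsv hTd hTsum hTK]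
  -- now rewrite the RHS
  have hYm : ∫ ω, (YInt Y m ω - YInt Y n ω) ∂μ = E M - e nn := by
    rcases Int.lt_or_le m 0 with hm0 | hm0
    · have hM0 : M = 0 := by omega
      simp only [YInt, if_pos hm0, if_neg (by omega : ¬ (n < 0)), zero_sub]
      rw [integral_neg]
      simp [hM0, hE, he, hnn]
    · have hMt : M = m.toNat + 1 := by omega
      simp only [YInt, if_neg (by omega : ¬ (m < 0)), if_neg (by omega : ¬ (n < 0))]
      rw [integral_sub (hYint _) (hYint _)]
      simp [hMt, hE, he, hnn]
  have hIcc : (Finset.Icc (m+1) n)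
      = (Finset.Ico M K).map ⟨fun (b:ℕ) => (b:ℤ), Nat.cast_injective⟩ := by
    ext a
    simp only [Finset.mem_Icc, Finset.mem_map, Finset.mem_Ico, Function.Embedding.coeFn_mk]
    constructor
    · rintro ⟨h1, h2⟩
      exact ⟨a.toNat, ⟨by omega, by omega⟩, by omega⟩
    · rintro ⟨b, ⟨hb1, hb2⟩, rfl⟩
      omega
  rw [hYm, hIcc, Finset.sum_map]
  have hterm : ∀ b ∈ Finset.Ico M K,
      (variance (diffSeq Y ((⟨fun (b:ℕ) => (b:ℤ), Nat.cast_injective⟩ :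
          Function.Embedding ℕ ℤ) b).toNat) μ / q ((⟨fun (b:ℕ) => (b:ℤ),
          Nat.cast_injective⟩ : Function.Embedding ℕ ℤ) b).toNat +
        (∫ ω, (YInt Y ((⟨fun (b:ℕ) => (b:ℤ), Nat.cast_injective⟩ :
          Function.Embedding ℕ ℤ) b) ω - YInt Y n ω) ∂μ) ^ 2 *
          (1 / q (((⟨fun (b:ℕ) => (b:ℤ), Nat.cast_injective⟩ :
          Function.Embedding ℕ ℤ) b).toNat + 1) - 1 / q ((⟨fun (b:ℕ) => (b:ℤ),
          Nat.cast_injective⟩ : Function.Embedding ℕ ℤ) b).toNat))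
      = V b / q b + T (b+1) ^ 2 * (1 / q (b+1) - 1 / q b) := by
    intro b hb
    simp only [Function.Embedding.coeFn_mk, Int.toNat_natCast]
    have hbY : ∫ ω, (YInt Y (b:ℤ) ω - YInt Y n ω) ∂μ = e b - e nn := by
      simp only [YInt, if_neg (by omega : ¬ ((b:ℤ) < 0)), if_neg (by omega : ¬ (n < 0))]
      rw [integral_sub (hYint _) (hYint _)]
      simp [he, hnn]
    rw [hbY]
    have h8 : (e b - e nn) ^ 2 = T (b+1) ^ 2 := by
      simp only [hT, hE]
      simp only [Nat.succ_ne_zero, if_false, Nat.add_sub_cancel]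
      ring
    rw [h8]
  rw [Finset.sum_congr rfl hterm]
  have h9 : (E M - e nn) ^ 2 = T M ^ 2 := by
    simp only [hT]; ring
  rw [h9]
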